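/- The sum over all positions j ∈ {0,…,m−1} of the sizes of the KMP dictionaries D_j is at most m, i.e., Σ_{j=0}^{m−1} |D_j| ≤ m. -/

import Mathlib

/-- The sum over all positions `j ∈ {0,…,m−1}` of the sizes of the KMP
dictionaries `D_j` is at most `m`.  Here `D_j` is identified with the set of
indices `j'` with `0 < j' < j` such that `j'` is the largest index with
`P[0…j'−1] = P[j−j'…j−1]` and `P[j'] = σ ≠ P[j]` (entries are indexed by the
symbol `σ = P[j']`, so each entry is determined by `j'`). -/
theorem sum_of_dictionary_sizes_le
    {α : Type*} [DecidableEq α] (m : ℕ) (P : ℕ → α) :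
    ∑ j ∈ Finset.range m,
      ((Finset.range j).filter (fun j' =>
        0 < j' ∧ j' < j ∧ (∀ t < j', P t = P (j - j' + t)) ∧ P j' ≠ P j ∧
          ∀ j'' < j, j' < j'' → (∀ t < j'', P t = P (j - j'' + t)) →
            P j'' ≠ P j')).card ≤ m := by
  classical
  rw [← Finset.card_sigma]
  have := Finset.card_le_card_of_injOn (f := fun p : Σ _ : ℕ, ℕ => p.1 - p.2)
    (s := (Finset.range m).sigma (fun j => (Finset.range j).filter (fun j' =>
        0 < j' ∧ j' < j ∧ (∀ t < j', P t = P (j - j' + t)) ∧ P j' ≠ P j ∧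
          ∀ j'' < j, j' < j'' → (∀ t < j'', P t = P (j - j'' + t)) →
            P j'' ≠ P j')))
    (t := Finset.range m)
    (by
      intro p hp
      simp only [Finset.mem_coe, Finset.mem_sigma, Finset.mem_filter, Finset.mem_range] at hp ⊢
      omega)
    (by
      intro p hp q hq h
      have h' : p.1 - p.2 = q.1 - q.2 := h
      simp only [Finset.mem_coe, Finset.mem_sigma, Finset.mem_filter, Finset.mem_range] at hp hq
      obtain ⟨hp1, _, hp0, hplt, hpbord, hpne, _⟩ := hp
      obtain ⟨hq1, _, hq0, hqlt, hqbord, hqne, _⟩ := hq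

      -- WLOG handled by symmetry via two cases
      rcases lt_trichotomy p.1 q.1 with hlt | heq | hgt
      · exfalso
        have h2 : p.2 < q.2 := by omega
        have := hqbord p.2 h2
        have heq1 : q.1 - q.2 + p.2 = p.1 := by omega
        rw [heq1] at this
        exact hpne this
      · have h2 : p.2 = q.2 := by omega
        exact Sigma.ext heq (by simp [h2])
      · exfalso
        have h2 : q.2 < p.2 := by omega
        have := hpbord q.2 h2
        have heq1 : p.1 - p.2 + q.2 = q.1 := by omega
        rw [heq1] at this
        exact hqne this)
  simpa using this
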